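/- Let P be a strong Feller Markov kernel on a Polish space X. If μ and ν are two invariant probability measures for P that are mutually singular, then the topological supports of μ and ν are disjoint: supp μ ∩ supp ν = ∅. -/

import Mathlib

open MeasureTheory ProbabilityTheory Filter
open scoped ENNReal

/-- A Markov kernel is *strong Feller* if it maps bounded measurable functions to
continuous functions. -/
def StrongFeller {X : Type*} [MeasurableSpace X] [TopologicalSpace X] (P : Kernel X X) : Prop :=
  ∀ f : X → ℝ, Measurable f → (∃ C, ∀ x, |f x| ≤ C) →
    Continuous fun x => ∫ y, f y ∂(P x)

/-- The topological support of a measure: the set of points all of whose neighbourhoods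
have positive measure (equivalently, the smallest closed set of full measure). -/
def msupport {X : Type*} [TopologicalSpace X] [MeasurableSpace X]
    (μ : Measure X) : Set X :=
  {x | ∀ U ∈ nhds x, 0 < μ U}

/-- A measure `μ` is invariant for the kernel `P` if `∫ P(x,·) μ(dx) = μ`. -/
def Invariant {X : Type*} [MeasurableSpace X] (P : Kernel X X) (μ : Measure X) : Prop :=
  μ.bind (fun x => P x) = μ

/-- Let `P` be a strong Feller Markov kernel on a Polish space `X`. If `μ` and `ν` are two
invariant probability measures for `P` that are mutually singular, then their topological
supports are disjoint. -/
private lemma eq_on_msupport_of_ae_eq {X : Type*} [TopologicalSpace X] [MeasurableSpace X]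
    [OpensMeasurableSpace X] {μ : Measure X} {g : X → ℝ} (hg : Continuous g) (c : ℝ)
    (h : ∀ᵐ x ∂μ, g x = c) : ∀ x ∈ msupport μ, g x = c := by
  intro x hx
  by_contra hne
  have hnull : μ {y | ¬ g y = c} = 0 := by
    rw [MeasureTheory.ae_iff] at h; exact h
  have hopen : IsOpen {y | ¬ g y = c} := by
    have : {y | ¬ g y = c} = g ⁻¹' ({c}ᶜ) := rfl
    rw [this]
    exact (isClosed_singleton.isOpen_compl).preimage hg
  have hpos := hx _ (hopen.mem_nhds hne)
  rw [hnull] at hpos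
  exact lt_irrefl 0 hpos

private lemma ae_kernel_eq_of_invariant {X : Type*} [MeasurableSpace X]
    (P : Kernel X X) [IsMarkovKernel P]
    (μ : Measure X) [IsProbabilityMeasure μ] (hμ : Invariant P μ)
    {A : Set X} (hA : MeasurableSet A) (hfull : μ A = 1) :
    ∀ᵐ x ∂μ, P x A = 1 := by
  have hbind : ∫⁻ x, P x A ∂μ = 1 := by
    rw [← Measure.bind_apply hA P.measurable.aemeasurable, hμ, hfull]
  have hbindc : ∫⁻ x, P x Aᶜ ∂μ = 0 := by
    have hsum : ∫⁻ x, P x A ∂μ + ∫⁻ x, P x Aᶜ ∂μ = 1 := by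
      rw [← MeasureTheory.lintegral_add_left (P.measurable_coe hA)]
      have : ∀ x, P x A + P x Aᶜ = 1 := fun x => by
        rw [measure_add_measure_compl hA, measure_univ]
      simp only [this, lintegral_const, measure_univ, one_mul]
    rw [hbind] at hsum
    exact (ENNReal.add_right_inj ENNReal.one_ne_top).mp (by rw [add_zero]; exact hsum)
  have h0 : ∀ᵐ x ∂μ, P x Aᶜ = 0 :=
    (lintegral_eq_zero_iff (P.measurable_coe hA.compl)).mp hbindc
  filter_upwards [h0] with x hx
  have := measure_add_measure_compl (μ := P x) hA
  rw [hx, add_zero, measure_univ] at this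
  exact this

theorem disjoint_supports_of_mutuallySingular_invariant
    {X : Type*} [TopologicalSpace X] [PolishSpace X] [MeasurableSpace X] [BorelSpace X]
    (P : Kernel X X) [IsMarkovKernel P] (hP : StrongFeller P)
    (μ ν : Measure X) [IsProbabilityMeasure μ] [IsProbabilityMeasure ν]
    (hμ : Invariant P μ) (hν : Invariant P ν) (hsing : μ ⟂ₘ ν) :
    msupport μ ∩ msupport ν = ∅ := by
  obtain ⟨s, hs, hμs, hνs⟩ := hsing
  set A := sᶜ with hAdef
  have hA : MeasurableSet A := hs.compl
  have hμA : μ A = 1 := by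
    rw [hAdef, measure_compl hs (measure_ne_top μ s), hμs, measure_univ, tsub_zero]
  have hνA : ν A = 0 := hνs
  -- the continuous function g x = P x A (as a real number)
  set g : X → ℝ := fun x => ∫ y, A.indicator (fun _ => (1:ℝ)) y ∂(P x) with hgdef
  have hgcont : Continuous g := by
    apply hP
    · exact measurable_const.indicator hA
    · refine ⟨1, fun x => ?_⟩
      by_cases hx : x ∈ A <;> simp [Set.indicator_apply, hx]
  have hgval : ∀ x, g x = (P x A).toReal := by
    intro x
    rw [hgdef]
    simp [integral_indicator_const (1:ℝ) hA]
    rfl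
  -- g = 1 on msupport μ
  have hgμ : ∀ x ∈ msupport μ, g x = 1 := by
    apply eq_on_msupport_of_ae_eq hgcont
    filter_upwards [ae_kernel_eq_of_invariant P μ hμ hA hμA] with x hx
    rw [hgval, hx]; simp
  -- g = 0 on msupport ν
  have hgν : ∀ x ∈ msupport ν, g x = 0 := by
    apply eq_on_msupport_of_ae_eq hgcont
    have hbind : ∫⁻ x, P x A ∂ν = 0 := by
      rw [← Measure.bind_apply hA P.measurable.aemeasurable, hν, hνA]
    have h0 : ∀ᵐ x ∂ν, P x A = 0 :=
      (lintegral_eq_zero_iff (P.measurable_coe hA)).mp hbind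
    filter_upwards [h0] with x hx
    rw [hgval, hx]; simp
  ext x
  simp only [Set.mem_inter_iff, Set.mem_empty_iff_false, iff_false, not_and]
  intro h1 h2
  have e1 := hgμ x h1
  have e2 := hgν x h2
  rw [e1] at e2
  exact one_ne_zero e2
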